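/- Let S be a finite semigroup that is a left regular band of groups, with idempotent-power map ω. Then the relation s ∼ t defined by (ω s)·t = s and (ω t)·s = t is an equivalence relation on S (reflexive, symmetric, transitive), and it is moreover a semigroup congruence: if s ∼ t then s·u ∼ t·u and u·s ∼ u·t for every u ∈ S. -/
import Mathlib


/-- The support relation `s ∼ t` on a left regular band of groups:
`(ω s)·t = s` and `(ω t)·s = t`. -/
def LRBGsim {S : Type*} [Mul S] (ω : S → S) (s t : S) : Prop :=
  ω s * t = s ∧ ω t * s = t

/-- In a finite LRBG, the relation `∼` is an equivalence relation
and a semigroup congruence. -/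
theorem lrbg_sim_is_congruence {S : Type*} [Semigroup S] [Fintype S] (ω : S → S)
    (hidem : ∀ s : S, ω s * ω s = ω s)
    (hpow : ∀ s : S, ∃ n : ℕ, ω s = (fun t => t * s)^[n] s)
    (lrbg1 : ∀ s : S, ω s * s = s)
    (lrbg2 : ∀ s t : S, s * t * ω s = s * t) :
    (∀ s : S, LRBGsim ω s s) ∧
    (∀ s t : S, LRBGsim ω s t → LRBGsim ω t s) ∧
    (∀ s t u : S, LRBGsim ω s t → LRBGsim ω t u → LRBGsim ω s u) ∧
    (∀ s t u : S, LRBGsim ω s t → LRBGsim ω (s * u) (t * u) ∧ LRBGsim ω (u * s) (u * t)) := by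
  -- ω of an idempotent's ω is itself
  have homega : ∀ s : S, ω (ω s) = ω s := by
    intro s
    obtain ⟨n, hn⟩ := hpow (ω s)
    rw [hn]; clear hn
    induction n with
    | zero => simp
    | succ n ih =>
      simp only [Function.iterate_succ_apply']
      rw [ih, hidem]
  -- key lemma: s ∼ t implies ω s * ω t = ω s
  have lemA : ∀ s t : S, ω s * t = s → ω t * s = t → ω s * ω t = ω s := by
    intro s t hst hts
    have base : ω s * ω t * s = s := by rw [mul_assoc, hts, hst]
    have key : ∀ n : ℕ, ω s * ω t * (fun x => x * s)^[n] s = (fun x => x * s)^[n] s := by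
      intro n
      induction n with
      | zero => simpa using base
      | succ n ih =>
        simp only [Function.iterate_succ_apply']
        rw [← mul_assoc, ih]
    obtain ⟨n, hn⟩ := hpow s
    have h1 := key n
    rw [← hn] at h1
    have h2 := lrbg2 (ω s) (ω t)
    rw [homega s] at h2
    rw [← h2]
    exact h1
  -- absorption on the right: ω (s*u) * ω s = ω (s*u)
  have absR : ∀ s u : S, ω (s * u) * ω s = ω (s * u) := by
    intro s u
    obtain ⟨n, hn⟩ := hpow (s * u)
    rw [hn]; clear hn
    induction n with
    | zero => simpa using lrbg2 s u
    | succ n ih =>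
      simp only [Function.iterate_succ_apply']
      rw [mul_assoc, lrbg2]
  -- absorption on the left: ω (u*s) * u * ω s = ω (u*s) * u
  have absL : ∀ s u : S, ω (u * s) * u * ω s = ω (u * s) * u := by
    intro s u
    obtain ⟨n, hn⟩ := hpow (u * s)
    rw [hn]; clear hn
    cases n with
    | zero =>
      simp only [Function.iterate_zero_apply]
      rw [mul_assoc u s u, mul_assoc, lrbg2]
    | succ n =>
      simp only [Function.iterate_succ_apply']
      rw [mul_assoc _ (u * s) u, mul_assoc u s u, ← mul_assoc _ u (s * u),
        mul_assoc _ (s * u) (ω s), lrbg2]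
  refine ⟨?_, ?_, ?_, ?_⟩
  · intro s
    exact ⟨lrbg1 s, lrbg1 s⟩
  · rintro s t ⟨h1, h2⟩
    exact ⟨h2, h1⟩
  · rintro s t u ⟨hst, hts⟩ ⟨htu, hut⟩
    constructor
    · conv_rhs => rw [← hst]
      rw [← htu, ← mul_assoc, lemA s t hst hts]
    · conv_rhs => rw [← hut]
      rw [← hts, ← mul_assoc, lemA u t hut htu]
  · rintro s t u ⟨hst, hts⟩
    have hA := lemA s t hst hts
    have hA' := lemA t s hts hst
    constructor
    · constructor
      · -- ω (s*u) * (t*u) = s*u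
        rw [← absR s u, mul_assoc, ← mul_assoc (ω s) t u, hst]
        exact lrbg1 (s * u)
      · rw [← absR t u, mul_assoc, ← mul_assoc (ω t) s u, hts]
        exact lrbg1 (t * u)
    · have hB : ω (u * s) * u * ω t = ω (u * s) * u := by
        rw [← absL s u, mul_assoc (ω (u * s) * u) (ω s) (ω t), hA]
      have hB' : ω (u * t) * u * ω s = ω (u * t) * u := by
        rw [← absL t u, mul_assoc (ω (u * t) * u) (ω t) (ω s), hA']
      constructor
      · -- ω (u*s) * (u*t) = u*s
        rw [← hts, ← mul_assoc u (ω t) s, ← mul_assoc (ω (u * s)) (u * ω t) s,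
          ← mul_assoc (ω (u * s)) u (ω t), hB, mul_assoc]
        exact lrbg1 (u * s)
      · rw [← hst, ← mul_assoc u (ω s) t, ← mul_assoc (ω (u * t)) (u * ω s) t,
          ← mul_assoc (ω (u * t)) u (ω s), hB', mul_assoc]
        exact lrbg1 (u * t)
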